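/- arXiv:2512.10524 — 4 statements merged into one kernel-verified Lean document; each statement's English description precedes it below -/
import Mathlib

section
/- Let p be a probability density on ℝⁿ, σ > 0, p_σ(x) = ∫ N(x; x₀, σ²I) p(x₀) dx₀, and D(x) = E[x₀ | x] the posterior mean under the posterior q(x₀|x) ∝ N(x; x₀, σ²I) p(x₀). Then the Jacobian of the denoiser equals the scaled posterior covariance: σ² · (∂D/∂x) = Cov[x₀ | x], where Cov[x₀|x] = ∫ (x₀ − D(x))(x₀ − D(x))ᵀ q(x₀|x) dx₀. -/
open MeasureTheory Real RealInnerProductSpace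

noncomputable def gpdf (k : ℕ) (σ d2 : ℝ) : ℝ :=
  (2 * Real.pi * σ ^ 2) ^ (-(k : ℝ) / 2) * Real.exp (-d2 / (2 * σ ^ 2))

/-- Density of the multivariate Gaussian `N(μ, σ²I)` on `ℝⁿ` evaluated at `x`. -/
noncomputable def gaussPdf (n : ℕ) (σ : ℝ) (μ x : EuclideanSpace ℝ (Fin n)) : ℝ :=
  gpdf n σ (‖x - μ‖ ^ 2)

/-- The Jacobian of the posterior-mean denoiser equals the scaled posterior covariance:
`σ² ⬝ ∂D/∂x = Cov[x₀ | x]`, stated directionally: for every direction `v`,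
`σ² (∂D/∂x) v = ∫ (x₀ − D x) ⟪x₀ − D x, v⟫ q(x₀|x) dx₀`,
where `q(x₀|x) = N(x; x₀, σ²I) p(x₀) / p_σ(x)` is the posterior. Regularity allowing
differentiation under the integral sign is encoded by the `fderiv` hypotheses. -/
theorem denoiser_jacobian_eq_posterior_covariance (n : ℕ)
    (p : EuclideanSpace ℝ (Fin n) → ℝ)
    (hp_nonneg : ∀ x, 0 ≤ p x)
    (hp_prob : ∫ x, p x = 1)
    (σ : ℝ) (hσ : 0 < σ)
    (pσ : EuclideanSpace ℝ (Fin n) → ℝ)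
    (hpσ : ∀ z, pσ z = ∫ x₀, gaussPdf n σ x₀ z * p x₀)
    (N : EuclideanSpace ℝ (Fin n) → EuclideanSpace ℝ (Fin n))
    (hN : ∀ z, N z = ∫ x₀, (gaussPdf n σ x₀ z * p x₀) • x₀)
    (D : EuclideanSpace ℝ (Fin n) → EuclideanSpace ℝ (Fin n))
    (hD : ∀ z, D z = (pσ z)⁻¹ • N z)
    (x : EuclideanSpace ℝ (Fin n))
    (hpos : 0 < pσ x)
    -- differentiation under the integral sign is valid:
    (hdiff_pσ : DifferentiableAt ℝ pσ x)
    (hdiff_N : DifferentiableAt ℝ N x)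
    (hfderiv_pσ : ∀ v, fderiv ℝ pσ x v
      = ∫ x₀, (gaussPdf n σ x₀ x * p x₀ / σ ^ 2) * ⟪x₀ - x, v⟫)
    (hfderiv_N : ∀ v, fderiv ℝ N x v
      = ∫ x₀, ((gaussPdf n σ x₀ x * p x₀ / σ ^ 2) * ⟪x₀ - x, v⟫) • x₀)
    -- integrability of the relevant second moments:
    (hint : Integrable fun x₀ => gaussPdf n σ x₀ x * p x₀)
    (hint1 : Integrable fun x₀ => (gaussPdf n σ x₀ x * p x₀) • x₀)
    (hint2 : Integrable fun x₀ => (gaussPdf n σ x₀ x * p x₀) * ‖x₀‖ ^ 2) :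
    ∀ v, σ ^ 2 • fderiv ℝ D x v
      = ∫ x₀, ((gaussPdf n σ x₀ x * p x₀ / pσ x) * ⟪x₀ - D x, v⟫) • (x₀ - D x) := by
  intro v
  have hσ2 : (σ : ℝ) ^ 2 ≠ 0 := pow_ne_zero 2 hσ.ne'
  set w : EuclideanSpace ℝ (Fin n) → ℝ := fun x₀ => gaussPdf n σ x₀ x * p x₀ with hw
  set a : ℝ := pσ x with ha
  have ha0 : a ≠ 0 := hpos.ne'
  have hw_nn : ∀ x₀, 0 ≤ w x₀ := by
    intro x₀
    apply mul_nonneg _ (hp_nonneg x₀)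
    unfold gaussPdf gpdf
    positivity
  have hwm : AEStronglyMeasurable w volume := hint.aestronglyMeasurable
  have hinner_cont : Continuous fun x₀ : EuclideanSpace ℝ (Fin n) => ⟪x₀, v⟫ :=
    continuous_id.inner continuous_const
  -- integrability lemmas
  have i_j1 : Integrable fun x₀ => w x₀ * ⟪x₀, v⟫ := by
    refine (hint1.norm.const_mul ‖v‖).mono
      (hwm.mul hinner_cont.aestronglyMeasurable) ?_
    filter_upwards with x₀
    have h1 : ‖w x₀ * ⟪x₀, v⟫‖ ≤ w x₀ * (‖x₀‖ * ‖v‖) := by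
      rw [norm_mul, Real.norm_eq_abs (w x₀), abs_of_nonneg (hw_nn x₀)]
      exact mul_le_mul_of_nonneg_left (abs_real_inner_le_norm x₀ v) (hw_nn x₀)
    refine h1.trans ?_
    have h2 : ‖(fun x₀ => ‖v‖ * ‖(gaussPdf n σ x₀ x * p x₀) • x₀‖) x₀‖
        = ‖v‖ * (w x₀ * ‖x₀‖) := by
      simp only [norm_smul]
      rw [Real.norm_eq_abs, abs_of_nonneg (by positivity), Real.norm_eq_abs (gaussPdf n σ x₀ x * p x₀),
        abs_of_nonneg (hw_nn x₀)]
      try ring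
    rw [h2]
    exact le_of_eq (by ring)
  have i_J2 : Integrable fun x₀ => (w x₀ * ⟪x₀, v⟫) • x₀ := by
    refine ((hint2.const_mul ‖v‖)).mono
      ((hwm.mul hinner_cont.aestronglyMeasurable).smul aestronglyMeasurable_id) ?_
    filter_upwards with x₀
    have hg : (0:ℝ) ≤ ‖v‖ * (gaussPdf n σ x₀ x * p x₀ * ‖x₀‖ ^ 2) :=
      mul_nonneg (norm_nonneg _) (mul_nonneg (hw_nn x₀) (by positivity))
    rw [norm_smul, norm_mul, Real.norm_eq_abs (w x₀), abs_of_nonneg (hw_nn x₀),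
      Real.norm_eq_abs (‖v‖ * (gaussPdf n σ x₀ x * p x₀ * ‖x₀‖ ^ 2)), abs_of_nonneg hg]
    calc w x₀ * ‖⟪x₀, v⟫‖ * ‖x₀‖
        ≤ w x₀ * (‖x₀‖ * ‖v‖) * ‖x₀‖ := by
          apply mul_le_mul_of_nonneg_right _ (norm_nonneg _)
          exact mul_le_mul_of_nonneg_left (abs_real_inner_le_norm x₀ v) (hw_nn x₀)
      _ = ‖v‖ * (w x₀ * ‖x₀‖ ^ 2) := by ring
  -- named integrals
  set J2 : EuclideanSpace ℝ (Fin n) := ∫ x₀, (w x₀ * ⟪x₀, v⟫) • x₀ with hJ2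
  set j1 : ℝ := ∫ x₀, w x₀ * ⟪x₀, v⟫ with hj1
  have hNx : N x = ∫ x₀, w x₀ • x₀ := by rw [hN x]
  have hax : a = ∫ x₀, w x₀ := by rw [ha, hpσ x]
  have hNxD : N x = a • D x := by
    rw [hD x, ← ha, smul_smul, mul_inv_cancel₀ ha0, one_smul]
  -- pointwise-form integrability facts
  have i3 : Integrable fun x₀ => (⟪x, v⟫ : ℝ) • (w x₀ • x₀) := hint1.smul (⟪x, v⟫ : ℝ)
  have i4 : Integrable fun x₀ => (⟪x, v⟫ : ℝ) * w x₀ := hint.const_mul _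
  have i5 : Integrable fun x₀ => (w x₀ * ⟪x₀, v⟫) • D x := i_j1.smul_const (D x)
  have i6 : Integrable fun x₀ => (⟪D x, v⟫ : ℝ) • (w x₀ • x₀) := hint1.smul (⟪D x, v⟫ : ℝ)
  have i7 : Integrable fun x₀ => (w x₀ * ⟪D x, v⟫) • D x := (hint.mul_const _).smul_const (D x)
  have i8 : Integrable fun x₀ => (w x₀ * ⟪x₀, v⟫) • x₀ - (w x₀ * ⟪x₀, v⟫) • D x := i_J2.sub i5
  have i9 : Integrable fun x₀ => (⟪D x, v⟫ : ℝ) • (w x₀ • x₀) - (w x₀ * ⟪D x, v⟫) • D x :=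
    i6.sub i7
  -- Step A : σ² • (fderiv N) v
  have hA : σ ^ 2 • fderiv ℝ N x v = J2 - ⟪x, v⟫ • N x := by
    rw [hfderiv_N v, ← integral_smul]
    have heq : (fun x₀ => σ ^ 2 • (((w x₀ / σ ^ 2) * ⟪x₀ - x, v⟫) • x₀))
        = fun x₀ => (w x₀ * ⟪x₀, v⟫) • x₀ - (⟪x, v⟫ : ℝ) • (w x₀ • x₀) := by
      funext x₀
      rw [inner_sub_left]
      match_scalars <;> (field_simp; try ring)
    rw [heq, integral_sub i_J2 i3, integral_smul, ← hNx, ← hJ2]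
  -- Step B : σ² * (fderiv pσ) v
  have hB : σ ^ 2 * fderiv ℝ pσ x v = j1 - ⟪x, v⟫ * a := by
    rw [hfderiv_pσ v, ← integral_const_mul]
    have heq : (fun x₀ => σ ^ 2 * ((w x₀ / σ ^ 2) * ⟪x₀ - x, v⟫))
        = fun x₀ => w x₀ * ⟪x₀, v⟫ - (⟪x, v⟫ : ℝ) * w x₀ := by
      funext x₀
      rw [inner_sub_left]
      field_simp
    rw [heq, integral_sub i_j1 i4, integral_const_mul, ← hax, ← hj1]
  -- Step C : the right-hand side
  have hC : (∫ x₀, ((w x₀ / a) * ⟪x₀ - D x, v⟫) • (x₀ - D x))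
      = a⁻¹ • J2 - (a⁻¹ * j1) • D x := by
    have heq : (fun x₀ => ((w x₀ / a) * ⟪x₀ - D x, v⟫) • (x₀ - D x))
        = fun x₀ => a⁻¹ • (((w x₀ * ⟪x₀, v⟫) • x₀ - (w x₀ * ⟪x₀, v⟫) • D x)
            - ((⟪D x, v⟫ : ℝ) • (w x₀ • x₀) - (w x₀ * ⟪D x, v⟫) • D x)) := by
      funext x₀
      rw [inner_sub_left]
      match_scalars <;> (field_simp; try ring)
    rw [heq, integral_smul, integral_sub i8 i9, integral_sub i_J2 i5, integral_sub i6 i7,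
      integral_smul, integral_smul_const, integral_smul_const, integral_mul_const,
      ← hNx, ← hax, ← hJ2, ← hj1, hNxD]
    match_scalars <;> (field_simp; try ring)
  -- Step D : derivative of D
  have hDfun : D = fun z => (pσ z)⁻¹ • N z := funext hD
  have hinv : HasFDerivAt (fun z => (pσ z)⁻¹) ((-(a ^ 2)⁻¹) • fderiv ℝ pσ x) x :=
    (hasDerivAt_inv ha0).comp_hasFDerivAt x hdiff_pσ.hasFDerivAt
  have hDf : HasFDerivAt D
      (a⁻¹ • fderiv ℝ N x + ((-(a ^ 2)⁻¹) • fderiv ℝ pσ x).smulRight (N x)) x := by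
    rw [hDfun]
    exact hinv.smul hdiff_N.hasFDerivAt
  rw [hDf.fderiv]
  have hval : (a⁻¹ • fderiv ℝ N x + ((-(a ^ 2)⁻¹) • fderiv ℝ pσ x).smulRight (N x)) v
      = a⁻¹ • (fderiv ℝ N x v) + ((-(a ^ 2)⁻¹) * fderiv ℝ pσ x v) • N x := by
    simp [ContinuousLinearMap.smulRight_apply]
  rw [hval, hC]
  have expand : σ ^ 2 • (a⁻¹ • fderiv ℝ N x v + ((-(a ^ 2)⁻¹) * fderiv ℝ pσ x v) • N x)
      = a⁻¹ • (σ ^ 2 • fderiv ℝ N x v) + ((-(a ^ 2)⁻¹) * (σ ^ 2 * fderiv ℝ pσ x v)) • N x := by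
    module
  rw [expand, hA, hB, hNxD]
  match_scalars <;> (field_simp; try ring)
end

section
/- Let p₀ be a probability density on ℝⁿ, σ_t > 0, and define the posterior q_t(x₀ | x_t) ∝ N(x_t; x₀, σ_t²I) p₀(x₀) with marginal p(x_t) = ∫ N(x_t; x₀, σ_t²I) p₀(x₀) dx₀. Let y ∈ ℝᵐ and define p(x₀ | y) ∝ N(y; H x₀, σ_y²I) p₀(x₀) for a linear map H : ℝⁿ → ℝᵐ, with p(y) the corresponding marginal. Let D(x_t) = E_{q_t}[x₀ | x_t] and Cov[x₀|x_t] the posterior covariance. Then the KL divergence satisfies KL(q_t(·|x_t) ‖ p(·|y)) = − log p(x_t) − ‖D(x_t) − x_t‖²/(2σ_t²) − Tr(Cov[x₀|x_t])/(2σ_t²) + ‖y − H D(x_t)‖²/(2σ_y²) + Tr(H Cov[x₀|x_t] Hᵀ)/(2σ_y²) + C, where C = log p(y) − n log σ_t + m log σ_y − ((n−m)/2) log(2π) does not depend on x_t. -/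
open MeasureTheory Real Matrix

lemma gpdf_pos (k : ℕ) {σ : ℝ} (hσ : 0 < σ) (d2 : ℝ) : 0 < gpdf k σ d2 := by
  unfold gpdf
  have h : (0:ℝ) < 2 * Real.pi * σ ^ 2 := by positivity
  positivity

lemma gpdf_le (k : ℕ) {σ : ℝ} (hσ : 0 < σ) {d2 : ℝ} (hd2 : 0 ≤ d2) :
    gpdf k σ d2 ≤ (2 * Real.pi * σ ^ 2) ^ (-(k : ℝ) / 2) := by
  unfold gpdf
  have h : (0:ℝ) < 2 * Real.pi * σ ^ 2 := by positivity
  calc (2 * Real.pi * σ ^ 2) ^ (-(k : ℝ) / 2) * Real.exp (-d2 / (2 * σ ^ 2))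
      ≤ (2 * Real.pi * σ ^ 2) ^ (-(k : ℝ) / 2) * 1 := by
        gcongr
        exact Real.exp_le_one_iff.mpr (div_nonpos_of_nonpos_of_nonneg (neg_nonpos.mpr hd2) (by positivity))
    _ = _ := mul_one _

lemma log_gpdf (k : ℕ) {σ : ℝ} (hσ : 0 < σ) (d2 : ℝ) :
    Real.log (gpdf k σ d2) = (-(k : ℝ) / 2) * Real.log (2 * Real.pi * σ ^ 2) - d2 / (2 * σ ^ 2) := by
  unfold gpdf
  have h : (0:ℝ) < 2 * Real.pi * σ ^ 2 := by positivity
  rw [Real.log_mul (by positivity) (Real.exp_ne_zero _), Real.log_rpow h, Real.log_exp]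
  ring

lemma normsq {n : ℕ} (v : EuclideanSpace ℝ (Fin n)) : ‖v‖ ^ 2 = ∑ j, v j ^ 2 := by
  rw [EuclideanSpace.norm_eq, Real.sq_sqrt (by positivity)]
  simp [sq_abs]

/-- **Closed form of the variational mode-seeking loss (linear case).**
With diffusion posterior `q(x₀|x_t) ∝ N(x_t; x₀, σ_t²I) p₀(x₀)` and measurement posterior
`r(x₀|y) ∝ N(y; H x₀, σ_y²I) p₀(x₀)`, posterior mean `D` and covariance matrix `C`,
`KL(q ‖ r) = − log p(x_t) − ‖D − x_t‖²/(2σ_t²) − Tr C/(2σ_t²) + ‖y − H D‖²/(2σ_y²)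
 + Tr (H C Hᵀ)/(2σ_y²) + C₀`, where
`C₀ = log p(y) − n log σ_t + m log σ_y − ((n−m)/2) log (2π)`. -/
theorem vml_closed_form_linear (n m : ℕ)
    (p0 : EuclideanSpace ℝ (Fin n) → ℝ)
    (hp0_nonneg : ∀ x, 0 ≤ p0 x) (hp0_prob : ∫ x, p0 x = 1)
    (σt σy : ℝ) (hσt : 0 < σt) (hσy : 0 < σy)
    (xt : EuclideanSpace ℝ (Fin n)) (y : Fin m → ℝ)
    (H : Matrix (Fin m) (Fin n) ℝ)
    (pxt : ℝ) (hpxt : pxt = ∫ x₀, gaussPdf n σt x₀ xt * p0 x₀) (hpxt_pos : 0 < pxt)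
    (py : ℝ)
    (hpy : py = ∫ x₀, gpdf m σy (∑ i, (y i - H.mulVec (fun k => x₀ k) i) ^ 2) * p0 x₀)
    (hpy_pos : 0 < py)
    (q r : EuclideanSpace ℝ (Fin n) → ℝ)
    (hq : ∀ x₀, q x₀ = gaussPdf n σt x₀ xt * p0 x₀ / pxt)
    (hr : ∀ x₀, r x₀ = gpdf m σy (∑ i, (y i - H.mulVec (fun k => x₀ k) i) ^ 2) * p0 x₀ / py)
    (D : EuclideanSpace ℝ (Fin n)) (hD : D = ∫ x₀, q x₀ • x₀)
    (C : Matrix (Fin n) (Fin n) ℝ)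
    (hC : ∀ i j, C i j = ∫ x₀, q x₀ * ((x₀ i - D i) * (x₀ j - D j)))
    -- all integrals are assumed finite:
    (hInt1 : Integrable fun x₀ => q x₀ * Real.log (q x₀ / r x₀))
    (hInt2 : Integrable fun x₀ => q x₀ • x₀)
    (hInt3 : Integrable fun x₀ => q x₀ * ‖x₀‖ ^ 2)
    (hInt4 : Integrable fun x₀ => q x₀ * ∑ i, (y i - H.mulVec (fun k => x₀ k) i) ^ 2) :
    ∫ x₀, q x₀ * Real.log (q x₀ / r x₀)
      = -Real.log pxt - ‖D - xt‖ ^ 2 / (2 * σt ^ 2) - C.trace / (2 * σt ^ 2)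
        + (∑ i, (y i - H.mulVec (fun k => D k) i) ^ 2) / (2 * σy ^ 2)
        + (H * C * Hᵀ).trace / (2 * σy ^ 2)
        + (Real.log py - n * Real.log σt + m * Real.log σy
            - ((n : ℝ) - m) / 2 * Real.log (2 * Real.pi)) := by
  -- p0 is integrable
  have hp0_int : Integrable p0 := by
    by_contra h
    rw [integral_undef h] at hp0_prob
    norm_num at hp0_prob
  have hqf : q = fun x₀ => gaussPdf n σt x₀ xt * p0 x₀ / pxt := funext hq
  have hGcont : Continuous (fun x₀ : EuclideanSpace ℝ (Fin n) => gaussPdf n σt x₀ xt) := by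
    unfold gaussPdf gpdf
    fun_prop
  -- q is integrable
  have hGp : Integrable (fun x₀ : EuclideanSpace ℝ (Fin n) => gaussPdf n σt x₀ xt * p0 x₀) := by
    refine Integrable.mono' (hp0_int.const_mul ((2 * Real.pi * σt ^ 2) ^ (-(n:ℝ)/2)))
      (hGcont.aestronglyMeasurable.mul hp0_int.1) (ae_of_all _ fun x₀ => ?_)
    have h1 : 0 ≤ gaussPdf n σt x₀ xt := (gpdf_pos n hσt _).le
    have h2 : gaussPdf n σt x₀ xt ≤ (2 * Real.pi * σt ^ 2) ^ (-(n:ℝ)/2) :=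
      gpdf_le n hσt (by positivity)
    rw [Real.norm_eq_abs, abs_of_nonneg (mul_nonneg h1 (hp0_nonneg x₀))]
    gcongr
    exact hp0_nonneg x₀
  have hIq : Integrable q := by
    rw [hqf]
    exact hGp.div_const _
  have hqm : AEStronglyMeasurable q volume := hIq.1
  have hq_nonneg : ∀ x₀, 0 ≤ q x₀ := fun x₀ => by
    rw [hq]
    exact div_nonneg (mul_nonneg (gpdf_pos n hσt _).le (hp0_nonneg _)) hpxt_pos.le
  -- ∫ q = 1
  have hq1 : ∫ x₀, q x₀ = 1 := by
    simp only [hq]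
    rw [integral_div, ← hpxt, div_self hpxt_pos.ne']
  -- coordinate facts
  have hcoord : ∀ j, Continuous (fun x₀ : EuclideanSpace ℝ (Fin n) => x₀ j) :=
    fun j => (EuclideanSpace.proj (𝕜 := ℝ) j).continuous
  have habs : ∀ (v : EuclideanSpace ℝ (Fin n)) j, |v j| ≤ ‖v‖ := by
    intro v j
    have h1 : (v j) ^ 2 ≤ ‖v‖ ^ 2 := by
      rw [normsq]
      exact Finset.single_le_sum (f := fun i => v i ^ 2) (fun i _ => sq_nonneg _)
        (Finset.mem_univ j)
    calc |v j| = Real.sqrt ((v j) ^ 2) := (Real.sqrt_sq_eq_abs _).symm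
      _ ≤ Real.sqrt (‖v‖ ^ 2) := Real.sqrt_le_sqrt h1
      _ = ‖v‖ := Real.sqrt_sq (norm_nonneg v)
  have int1 : ∀ j, Integrable (fun x₀ => q x₀ * x₀ j) := by
    intro j
    have h := (EuclideanSpace.proj (𝕜 := ℝ) j).integrable_comp hInt2
    simpa [smul_eq_mul] using h
  have hDj : ∀ j, ∫ x₀, q x₀ * x₀ j = D j := by
    intro j
    have h := (EuclideanSpace.proj (𝕜 := ℝ) j).integral_comp_comm hInt2
    simp only [PiLp.proj_apply, PiLp.smul_apply, smul_eq_mul] at h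
    rw [hD]
    exact h
  have intg : ∀ j, Integrable (fun x₀ => q x₀ * (x₀ j - D j)) := by
    intro j
    have : (fun x₀ : EuclideanSpace ℝ (Fin n) => q x₀ * (x₀ j - D j))
        = fun x₀ => q x₀ * x₀ j - q x₀ * D j := by funext x₀; ring
    rw [this]
    exact (int1 j).sub (hIq.mul_const _)
  have hg0 : ∀ j, ∫ x₀, q x₀ * (x₀ j - D j) = 0 := by
    intro j
    have : (fun x₀ : EuclideanSpace ℝ (Fin n) => q x₀ * (x₀ j - D j))
        = fun x₀ => q x₀ * x₀ j - q x₀ * D j := by funext x₀; ring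
    rw [this, integral_sub (int1 j) (hIq.mul_const _), hDj, integral_mul_const, hq1]
    ring
  have int2 : ∀ j k, Integrable (fun x₀ => q x₀ * (x₀ j * x₀ k)) := by
    intro j k
    refine Integrable.mono' hInt3 (hqm.mul ((hcoord j).mul (hcoord k)).aestronglyMeasurable)
      (ae_of_all _ fun x₀ => ?_)
    rw [Real.norm_eq_abs, abs_mul, abs_of_nonneg (hq_nonneg x₀), abs_mul]
    have h1 : |x₀ j| * |x₀ k| ≤ ‖x₀‖ * ‖x₀‖ :=
      mul_le_mul (habs x₀ j) (habs x₀ k) (abs_nonneg _) (norm_nonneg _)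
    calc q x₀ * (|x₀ j| * |x₀ k|) ≤ q x₀ * (‖x₀‖ * ‖x₀‖) := by
          exact mul_le_mul_of_nonneg_left h1 (hq_nonneg x₀)
      _ = q x₀ * ‖x₀‖ ^ 2 := by ring
  have intg2 : ∀ j k, Integrable (fun x₀ => q x₀ * ((x₀ j - D j) * (x₀ k - D k))) := by
    intro j k
    have : (fun x₀ : EuclideanSpace ℝ (Fin n) => q x₀ * ((x₀ j - D j) * (x₀ k - D k)))
        = fun x₀ => q x₀ * (x₀ j * x₀ k) - D k * (q x₀ * x₀ j) - D j * (q x₀ * x₀ k)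
            + (D j * D k) * q x₀ := by funext x₀; ring
    rw [this]
    exact (((int2 j k).sub ((int1 j).const_mul _)).sub ((int1 k).const_mul _)).add
      (hIq.const_mul _)
  -- expansion of a quadratic form
  have expand : ∀ (u : ℝ) (v : Fin n → ℝ) (x₀ : EuclideanSpace ℝ (Fin n)),
      q x₀ * (u + ∑ j, v j * (x₀ j - D j)) ^ 2
      = u ^ 2 * q x₀ + (∑ j, (2 * u * v j) * (q x₀ * (x₀ j - D j)))
        + ∑ j, ∑ k, (v j * v k) * (q x₀ * ((x₀ j - D j) * (x₀ k - D k))) := by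
    intro u v x₀
    have key : ∀ s : ℝ, s = ∑ j, v j * (x₀ j - D j) →
        q x₀ * (u + s) ^ 2
        = u ^ 2 * q x₀ + (∑ j, (2 * u * v j) * (q x₀ * (x₀ j - D j)))
          + ∑ j, ∑ k, (v j * v k) * (q x₀ * ((x₀ j - D j) * (x₀ k - D k))) := by
      intro s hs
      have h3 : q x₀ * s = ∑ j, v j * (q x₀ * (x₀ j - D j)) := by
        rw [hs, Finset.mul_sum]
        exact Finset.sum_congr rfl fun j _ => by ring
      have h4 : q x₀ * s ^ 2
          = ∑ j, ∑ k, (v j * v k) * (q x₀ * ((x₀ j - D j) * (x₀ k - D k))) := by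
        rw [sq, hs, Finset.sum_mul_sum, Finset.mul_sum]
        refine Finset.sum_congr rfl fun j _ => ?_
        rw [Finset.mul_sum]
        exact Finset.sum_congr rfl fun k _ => by ring
      have h5 : (∑ j, (2 * u * v j) * (q x₀ * (x₀ j - D j)))
          = (2 * u) * ∑ j, v j * (q x₀ * (x₀ j - D j)) := by
        rw [Finset.mul_sum]
        exact Finset.sum_congr rfl fun j _ => by ring
      rw [h5, ← h3, ← h4]
      ring
    exact key _ rfl
  have per_int : ∀ (u : ℝ) (v : Fin n → ℝ),
      Integrable (fun x₀ => q x₀ * (u + ∑ j, v j * (x₀ j - D j)) ^ 2) := by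
    intro u v
    have : (fun x₀ : EuclideanSpace ℝ (Fin n) => q x₀ * (u + ∑ j, v j * (x₀ j - D j)) ^ 2)
        = fun x₀ => u ^ 2 * q x₀ + (∑ j, (2 * u * v j) * (q x₀ * (x₀ j - D j)))
          + ∑ j, ∑ k, (v j * v k) * (q x₀ * ((x₀ j - D j) * (x₀ k - D k))) :=
      funext (expand u v)
    rw [this]
    exact ((hIq.const_mul _).add (integrable_finset_sum _ fun j _ => (intg j).const_mul _)).add
      (integrable_finset_sum _ fun j _ => integrable_finset_sum _ fun k _ =>
        (intg2 j k).const_mul _)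
  have per_val : ∀ (u : ℝ) (v : Fin n → ℝ),
      ∫ x₀, q x₀ * (u + ∑ j, v j * (x₀ j - D j)) ^ 2
      = u ^ 2 + ∑ j, ∑ k, (v j * v k) * C j k := by
    intro u v
    have he : (fun x₀ : EuclideanSpace ℝ (Fin n) => q x₀ * (u + ∑ j, v j * (x₀ j - D j)) ^ 2)
        = fun x₀ => u ^ 2 * q x₀ + (∑ j, (2 * u * v j) * (q x₀ * (x₀ j - D j)))
          + ∑ j, ∑ k, (v j * v k) * (q x₀ * ((x₀ j - D j) * (x₀ k - D k))) :=
      funext (expand u v)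
    have IA : Integrable (fun x₀ : EuclideanSpace ℝ (Fin n) => u ^ 2 * q x₀) :=
      hIq.const_mul _
    have IB : Integrable (fun x₀ : EuclideanSpace ℝ (Fin n) =>
        ∑ j, (2 * u * v j) * (q x₀ * (x₀ j - D j))) :=
      integrable_finset_sum _ fun j _ => (intg j).const_mul _
    have IC : Integrable (fun x₀ : EuclideanSpace ℝ (Fin n) =>
        ∑ j, ∑ k, (v j * v k) * (q x₀ * ((x₀ j - D j) * (x₀ k - D k)))) :=
      integrable_finset_sum _ fun j _ => integrable_finset_sum _ fun k _ =>
        (intg2 j k).const_mul _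
    have IAB : Integrable (fun x₀ : EuclideanSpace ℝ (Fin n) =>
        u ^ 2 * q x₀ + ∑ j, (2 * u * v j) * (q x₀ * (x₀ j - D j))) := IA.add IB
    rw [he, integral_add IAB IC, integral_add IA IB,
      integral_const_mul, hq1,
      integral_finset_sum _ (fun j _ => (intg j).const_mul _),
      integral_finset_sum _ (fun j _ => integrable_finset_sum _ fun k _ =>
        (intg2 j k).const_mul _)]
    simp only [integral_const_mul]
    rw [Finset.sum_congr rfl fun j _ => by rw [hg0 j, mul_zero]]
    simp only [Finset.sum_const_zero, add_zero, mul_one]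
    congr 1
    refine Finset.sum_congr rfl fun j _ => ?_
    rw [integral_finset_sum _ (fun k _ => (intg2 j k).const_mul _)]
    refine Finset.sum_congr rfl fun k _ => ?_
    rw [integral_const_mul, ← hC]
  have hquad : ∀ (N : ℕ) (u : Fin N → ℝ) (v : Fin N → Fin n → ℝ),
      (∫ x₀, q x₀ * ∑ i, (u i + ∑ j, v i j * (x₀ j - D j)) ^ 2)
      = ∑ i, ((u i) ^ 2 + ∑ j, ∑ k, (v i j * v i k) * C j k) := by
    intro N u v
    have : (fun x₀ : EuclideanSpace ℝ (Fin n) =>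
        q x₀ * ∑ i, (u i + ∑ j, v i j * (x₀ j - D j)) ^ 2)
        = fun x₀ => ∑ i, q x₀ * (u i + ∑ j, v i j * (x₀ j - D j)) ^ 2 := by
      funext x₀; rw [Finset.mul_sum]
    rw [this, integral_finset_sum _ (fun i _ => per_int (u i) (v i))]
    exact Finset.sum_congr rfl fun i _ => per_val (u i) (v i)
  -- first moment computation
  have hpt1 : ∀ x₀ : EuclideanSpace ℝ (Fin n), ‖xt - x₀‖ ^ 2
      = ∑ i, ((xt i - D i) + ∑ j, (if i = j then (-1:ℝ) else 0) * (x₀ j - D j)) ^ 2 := by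
    intro x₀
    rw [normsq]
    refine Finset.sum_congr rfl fun i _ => ?_
    have hsum : (∑ j, (if i = j then (-1:ℝ) else 0) * (x₀ j - D j)) = -(x₀ i - D i) := by
      simp [ite_mul]
    rw [hsum, PiLp.sub_apply]
    ring
  have hE1int : Integrable (fun x₀ => q x₀ * ‖xt - x₀‖ ^ 2) := by
    have : (fun x₀ : EuclideanSpace ℝ (Fin n) => q x₀ * ‖xt - x₀‖ ^ 2)
        = fun x₀ => ∑ i, q x₀ *
          ((xt i - D i) + ∑ j, (if i = j then (-1:ℝ) else 0) * (x₀ j - D j)) ^ 2 := by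
      funext x₀; rw [hpt1 x₀, Finset.mul_sum]
    rw [this]
    exact integrable_finset_sum _ fun i _ => per_int _ _
  have hE1 : ∫ x₀, q x₀ * ‖xt - x₀‖ ^ 2 = ‖D - xt‖ ^ 2 + C.trace := by
    have h : (fun x₀ : EuclideanSpace ℝ (Fin n) => q x₀ * ‖xt - x₀‖ ^ 2)
        = fun x₀ => q x₀ * ∑ i, ((xt i - D i)
            + ∑ j, (if i = j then (-1:ℝ) else 0) * (x₀ j - D j)) ^ 2 := by
      funext x₀; rw [hpt1 x₀]
    rw [h, hquad n (fun i => xt i - D i) (fun i j => if i = j then (-1:ℝ) else 0)]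
    rw [Finset.sum_add_distrib]
    congr 1
    · rw [normsq]
      exact Finset.sum_congr rfl fun i _ => by rw [PiLp.sub_apply]; ring
    · rw [Matrix.trace]
      refine Finset.sum_congr rfl fun i _ => ?_
      simp [Finset.sum_ite_eq, Matrix.diag]
  -- second moment computation
  have hpt2 : ∀ (x₀ : EuclideanSpace ℝ (Fin n)) i,
      y i - H.mulVec (fun k => x₀ k) i
      = (y i - H.mulVec (fun k => D k) i) + ∑ j, (-(H i j)) * (x₀ j - D j) := by
    intro x₀ i
    simp only [Matrix.mulVec, dotProduct]
    rw [show (∑ j, (-(H i j)) * (x₀ j - D j))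
        = (∑ j, H i j * D j) - ∑ j, H i j * x₀ j by
      rw [← Finset.sum_sub_distrib]
      exact Finset.sum_congr rfl fun j _ => by ring]
    ring
  have htr : (H * C * Hᵀ).trace = ∑ i, ∑ j, ∑ k, ((-(H i j)) * (-(H i k))) * C j k := by
    simp only [Matrix.trace, Matrix.diag, Matrix.mul_apply, Matrix.transpose_apply,
      Finset.sum_mul]
    refine Finset.sum_congr rfl fun i _ => ?_
    rw [Finset.sum_comm]
    exact Finset.sum_congr rfl fun j _ => Finset.sum_congr rfl fun k _ => by ring
  have hE2 : ∫ x₀, q x₀ * (∑ i, (y i - H.mulVec (fun k => x₀ k) i) ^ 2)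
      = (∑ i, (y i - H.mulVec (fun k => D k) i) ^ 2) + (H * C * Hᵀ).trace := by
    have h : (fun x₀ : EuclideanSpace ℝ (Fin n) =>
        q x₀ * ∑ i, (y i - H.mulVec (fun k => x₀ k) i) ^ 2)
        = fun x₀ => q x₀ * ∑ i, ((y i - H.mulVec (fun k => D k) i)
            + ∑ j, (-(H i j)) * (x₀ j - D j)) ^ 2 := by
      funext x₀
      congr 1
      exact Finset.sum_congr rfl fun i _ => by rw [hpt2 x₀ i]
    rw [h, hquad m (fun i => y i - H.mulVec (fun k => D k) i) (fun i j => -(H i j)),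
      Finset.sum_add_distrib, htr]
  -- pointwise log identity
  have hlog : ∀ x₀, q x₀ * Real.log (q x₀ / r x₀)
      = (Real.log py - Real.log pxt - (n:ℝ)/2 * Real.log (2*Real.pi*σt^2)
          + (m:ℝ)/2 * Real.log (2*Real.pi*σy^2)) * q x₀
        - q x₀ * ‖xt - x₀‖ ^ 2 / (2 * σt ^ 2)
        + q x₀ * (∑ i, (y i - H.mulVec (fun k => x₀ k) i) ^ 2) / (2 * σy ^ 2) := by
    intro x₀
    rcases eq_or_lt_of_le (hp0_nonneg x₀) with h0 | h0
    · have hq0 : q x₀ = 0 := by rw [hq, ← h0]; simp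
      simp [hq0]
    · have hqpos : 0 < q x₀ := by
        rw [hq]
        exact div_pos (mul_pos (gpdf_pos n hσt _) h0) hpxt_pos
      have hrpos : 0 < r x₀ := by
        rw [hr]
        exact div_pos (mul_pos (gpdf_pos m hσy _) h0) hpy_pos
      rw [Real.log_div hqpos.ne' hrpos.ne', hq, hr]
      unfold gaussPdf
      rw [Real.log_div (mul_ne_zero (gpdf_pos n hσt _).ne' h0.ne') hpxt_pos.ne',
        Real.log_div (mul_ne_zero (gpdf_pos m hσy _).ne' h0.ne') hpy_pos.ne',
        Real.log_mul (gpdf_pos n hσt _).ne' h0.ne',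
        Real.log_mul (gpdf_pos m hσy _).ne' h0.ne',
        log_gpdf n hσt, log_gpdf m hσy]
      ring
  -- assemble
  have hsplit : (fun x₀ => q x₀ * Real.log (q x₀ / r x₀))
      = fun x₀ => (Real.log py - Real.log pxt - (n:ℝ)/2 * Real.log (2*Real.pi*σt^2)
          + (m:ℝ)/2 * Real.log (2*Real.pi*σy^2)) * q x₀
        - q x₀ * ‖xt - x₀‖ ^ 2 / (2 * σt ^ 2)
        + q x₀ * (∑ i, (y i - H.mulVec (fun k => x₀ k) i) ^ 2) / (2 * σy ^ 2) :=
    funext hlog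
  have J1 : Integrable (fun x₀ : EuclideanSpace ℝ (Fin n) =>
      (Real.log py - Real.log pxt - (n:ℝ)/2 * Real.log (2*Real.pi*σt^2)
        + (m:ℝ)/2 * Real.log (2*Real.pi*σy^2)) * q x₀) := hIq.const_mul _
  have J2 : Integrable (fun x₀ : EuclideanSpace ℝ (Fin n) =>
      q x₀ * ‖xt - x₀‖ ^ 2 / (2 * σt ^ 2)) := hE1int.div_const _
  have J12 : Integrable (fun x₀ : EuclideanSpace ℝ (Fin n) =>
      (Real.log py - Real.log pxt - (n:ℝ)/2 * Real.log (2*Real.pi*σt^2)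
        + (m:ℝ)/2 * Real.log (2*Real.pi*σy^2)) * q x₀
      - q x₀ * ‖xt - x₀‖ ^ 2 / (2 * σt ^ 2)) := J1.sub J2
  have J3 : Integrable (fun x₀ : EuclideanSpace ℝ (Fin n) =>
      (q x₀ * ∑ i, (y i - H.mulVec (fun k => x₀ k) i) ^ 2) / (2 * σy ^ 2)) :=
    hInt4.div_const _
  rw [hsplit, integral_add J12 J3, integral_sub J1 J2,
    integral_const_mul, integral_div, integral_div, hq1, hE1, hE2]
  have lt1 : Real.log (2 * Real.pi * σt ^ 2) = Real.log (2 * Real.pi) + 2 * Real.log σt := by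
    rw [Real.log_mul (by positivity) (by positivity), Real.log_pow]
    push_cast; ring
  have lt2 : Real.log (2 * Real.pi * σy ^ 2) = Real.log (2 * Real.pi) + 2 * Real.log σy := by
    rw [Real.log_mul (by positivity) (by positivity), Real.log_pow]
    push_cast; ring
  rw [lt1, lt2]
  ring
end

section
/- Let p_t(x) = ∫ N(x; x₀, σ_t²I) p₀(x₀) dx₀ with σ_t → 0 as t → 0, and suppose (i) log p_t(x) → log p₀(x) pointwise on the ball B(0,d), (ii) ∇ log p_t and ∇² log p_t are bounded uniformly in t < τ on B(0,d). Let H ∈ ℝ^{m×n}, y ∈ ℝᵐ, σ_y > 0, D(x,t) = x + σ_t² ∇ log p_t(x), and define VML_t(x) as in the linear VML decomposition with constant C_VML = −n/2 + m log σ_y − ((n−m)/2) log 2π; i.e., VML_t(x) = −log p_t(x) − (σ_t²/2)‖∇ log p_t(x)‖² − (σ_t²/2)Tr(∇² log p_t(x)) + ‖y − H D(x,t)‖²/(2σ_y²) + (σ_t⁴/(2σ_y²))Tr(H ∇² log p_t(x) Hᵀ) + (σ_t²/(2σ_y²))Tr(H Hᵀ) + log p(y) − n log σ_t + C_VML. Then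 VML_t(x) + n log σ_t converges pointwise on B(0,d) to −log p₀(x|y) + Ĉ where Ĉ = −n/2 − (n/2) log 2π, with log p₀(x|y) = log p₀(x) + log N(y; Hx, σ_y²I) − log p(y). -/
open MeasureTheory Real Filter Matrix

lemma log_gpdf_eq (k : ℕ) (σ d2 : ℝ) (hσ : 0 < σ) :
    Real.log (gpdf k σ d2)
      = (-(k : ℝ) / 2) * (Real.log (2 * Real.pi) + 2 * Real.log σ) - d2 / (2 * σ ^ 2) := by
  have h2π : (0:ℝ) < 2 * Real.pi := by positivity
  have hbase : (0:ℝ) < 2 * Real.pi * σ ^ 2 := by positivity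
  unfold gpdf
  rw [Real.log_mul (Real.rpow_pos_of_pos hbase _).ne' (Real.exp_ne_zero _),
    Real.log_rpow hbase, Real.log_exp, Real.log_mul h2π.ne' (by positivity),
    Real.log_pow]
  push_cast
  ring

lemma trace_conj_bound {m n : ℕ} (H : Matrix (Fin m) (Fin n) ℝ) (M : Matrix (Fin n) (Fin n) ℝ)
    (K : ℝ) (hM : ∀ i j, |M i j| ≤ K) :
    |(H * M * Hᵀ).trace| ≤ (∑ i, ∑ j, ∑ k, |H i k| * |H i j|) * K := by
  calc |(H * M * Hᵀ).trace| ≤ ∑ i, |(H * M * Hᵀ) i i| := by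
        exact Finset.abs_sum_le_sum_abs _ _
    _ ≤ ∑ i, ∑ j, ∑ k, |H i k| * |H i j| * K := by
        refine Finset.sum_le_sum fun i _ => ?_
        simp only [Matrix.mul_apply, Matrix.transpose_apply]
        calc |∑ j, (∑ k, H i k * M k j) * H i j|
            = |∑ j, ∑ k, H i k * M k j * H i j| := by
              congr 1; exact Finset.sum_congr rfl fun j _ => Finset.sum_mul _ _ _
          _ ≤ ∑ j, |∑ k, H i k * M k j * H i j| := Finset.abs_sum_le_sum_abs _ _
          _ ≤ ∑ j, ∑ k, |H i k * M k j * H i j| :=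
              Finset.sum_le_sum fun j _ => Finset.abs_sum_le_sum_abs _ _
          _ ≤ ∑ j, ∑ k, |H i k| * |H i j| * K := by
              refine Finset.sum_le_sum fun j _ => Finset.sum_le_sum fun k _ => ?_
              rw [abs_mul, abs_mul]
              calc |H i k| * |M k j| * |H i j| = |H i k| * |H i j| * |M k j| := by ring
                _ ≤ |H i k| * |H i j| * K := by
                    have := hM k j
                    have h0 : (0:ℝ) ≤ |H i k| * |H i j| := by positivity
                    nlinarith [abs_nonneg (M k j)]
    _ = (∑ i, ∑ j, ∑ k, |H i k| * |H i j|) * K := by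
        simp [Finset.sum_mul]

/-- **Pointwise limit of the (shifted) VML.** With `p_t` the Gaussian smoothing of `p₀`,
`D(x,t) = x + σ_t² ∇ log p_t(x)`, uniformly bounded score and Hessian on `B(0,d)` and
pointwise convergence of `log p_t` to `log p₀` there, the function
`VML_t(x) + n log σ_t` converges pointwise on `B(0,d)` to `− log p₀(x|y) + Ĉ` as `t → 0`,
where `Ĉ = −n/2 − (n/2) log 2π` and
`log p₀(x|y) = log p₀(x) + log N(y; Hx, σ_y²I) − log p(y)`. -/
theorem vml_pointwise_limit (n m : ℕ) (τ d : ℝ) (hτ : 0 < τ) (hd : 0 < d)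
    (p0 : EuclideanSpace ℝ (Fin n) → ℝ)
    (hp0_nonneg : ∀ x, 0 ≤ p0 x) (hp0_prob : ∫ x, p0 x = 1)
    (σ : ℝ → ℝ) (hσpos : ∀ t ∈ Set.Ioo (0 : ℝ) τ, 0 < σ t)
    (hσ0 : Tendsto σ (nhdsWithin 0 (Set.Ioo 0 τ)) (nhds 0))
    (p : ℝ → EuclideanSpace ℝ (Fin n) → ℝ)
    (hp : ∀ t x, p t x = ∫ x₀, gaussPdf n (σ t) x₀ x * p0 x₀)
    -- `p_t ∈ C²` on the ball; `g t x = ∇ log p_t(x)`, `Hess t x = ∇² log p_t(x)`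
    (hC2 : ∀ t ∈ Set.Ioo (0 : ℝ) τ,
      ContDiffOn ℝ 2 (fun x => Real.log (p t x)) (Metric.closedBall 0 d))
    (g : ℝ → EuclideanSpace ℝ (Fin n) → EuclideanSpace ℝ (Fin n))
    (hg : ∀ t ∈ Set.Ioo (0 : ℝ) τ, ∀ x ∈ Metric.closedBall (0 : EuclideanSpace ℝ (Fin n)) d,
      HasGradientAt (fun z => Real.log (p t z)) (g t x) x)
    (Hess : ℝ → EuclideanSpace ℝ (Fin n) → Matrix (Fin n) (Fin n) ℝ)
    (hHess : ∀ t ∈ Set.Ioo (0 : ℝ) τ, ∀ x ∈ Metric.closedBall (0 : EuclideanSpace ℝ (Fin n)) d,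
      ∀ i j, Hess t x i j = fderiv ℝ (g t) x (EuclideanSpace.single j 1) i)
    -- (i) pointwise convergence of `log p_t` to `log p₀` on the ball
    (hlim : ∀ x ∈ Metric.closedBall (0 : EuclideanSpace ℝ (Fin n)) d,
      Tendsto (fun t => Real.log (p t x)) (nhdsWithin 0 (Set.Ioo 0 τ))
        (nhds (Real.log (p0 x))))
    -- (ii) uniform (in `t < τ`) bounds on score and Hessian over the ball
    (hbdd : ∃ K, ∀ t ∈ Set.Ioo (0 : ℝ) τ,
      ∀ x ∈ Metric.closedBall (0 : EuclideanSpace ℝ (Fin n)) d,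
        ‖g t x‖ ≤ K ∧ ∀ i j, |Hess t x i j| ≤ K)
    (H : Matrix (Fin m) (Fin n) ℝ) (y : Fin m → ℝ) (σy : ℝ) (hσy : 0 < σy)
    (py : ℝ)
    (hpy : py = ∫ x₀, gpdf m σy (∑ i, (y i - H.mulVec (fun k => x₀ k) i) ^ 2) * p0 x₀)
    (hpy_pos : 0 < py) :
    ∀ x ∈ Metric.closedBall (0 : EuclideanSpace ℝ (Fin n)) d,
      Tendsto
        (fun t =>
          (-Real.log (p t x) - σ t ^ 2 / 2 * ‖g t x‖ ^ 2
              - σ t ^ 2 / 2 * (Hess t x).trace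
              + (∑ i, (y i - H.mulVec (fun k => (x + σ t ^ 2 • g t x) k) i) ^ 2)
                  / (2 * σy ^ 2)
              + σ t ^ 4 / (2 * σy ^ 2) * (H * Hess t x * Hᵀ).trace
              + σ t ^ 2 / (2 * σy ^ 2) * (H * Hᵀ).trace
              + Real.log py - n * Real.log (σ t)
              + (-(n : ℝ) / 2 + m * Real.log σy
                  - ((n : ℝ) - m) / 2 * Real.log (2 * Real.pi)))
            + n * Real.log (σ t))
        (nhdsWithin 0 (Set.Ioo 0 τ))
        (nhds
          (-(Real.log (p0 x)
              + Real.log (gpdf m σy (∑ i, (y i - H.mulVec (fun k => x k) i) ^ 2))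
              - Real.log py)
            + (-(n : ℝ) / 2 - (n : ℝ) / 2 * Real.log (2 * Real.pi)))) := by
  intro x hx
  set l := nhdsWithin (0:ℝ) (Set.Ioo 0 τ) with hl
  obtain ⟨K, hKpos, hKb⟩ : ∃ K : ℝ, 0 < K ∧
      ∀ t ∈ Set.Ioo (0:ℝ) τ, ‖g t x‖ ≤ K ∧ ∀ i j, |Hess t x i j| ≤ K := by
    obtain ⟨K₀, hK₀⟩ := hbdd
    refine ⟨|K₀| + 1, by positivity, fun t ht => ?_⟩
    obtain ⟨h1, h2⟩ := hK₀ t ht x hx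
    have hK0K : K₀ ≤ |K₀| + 1 := le_trans (le_abs_self _) (by linarith [abs_nonneg K₀])
    exact ⟨h1.trans hK0K, fun i j => (h2 i j).trans hK0K⟩
  have hev : ∀ᶠ t in l, t ∈ Set.Ioo (0:ℝ) τ := self_mem_nhdsWithin
  have hσ2 : Tendsto (fun t => σ t ^ 2) l (nhds 0) := by
    simpa using hσ0.pow 2
  have hσ4 : Tendsto (fun t => σ t ^ 4) l (nhds 0) := by
    simpa using hσ0.pow 4
  -- squeeze helper
  have key : ∀ (f s : ℝ → ℝ) (c : ℝ), Tendsto s l (nhds 0) →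
      (∀ᶠ t in l, |f t| ≤ s t * c) → Tendsto f l (nhds 0) := by
    intro f s c hs h
    have hc : Tendsto (fun t => s t * c) l (nhds 0) := by
      simpa using hs.mul_const c
    exact squeeze_zero_norm' (h.mono fun t ht => by simpa [Real.norm_eq_abs] using ht) hc
  -- Term 2
  have T2 : Tendsto (fun t => σ t ^ 2 / 2 * ‖g t x‖ ^ 2) l (nhds 0) := by
    refine key _ _ (K ^ 2 / 2) hσ2 (hev.mono fun t ht => ?_)
    have h1 := (hKb t ht).1
    have h2 : ‖g t x‖ ^ 2 ≤ K ^ 2 := by nlinarith [norm_nonneg (g t x)]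
    have h3 : (0:ℝ) ≤ σ t ^ 2 / 2 * ‖g t x‖ ^ 2 := by positivity
    rw [abs_of_nonneg h3]
    calc σ t ^ 2 / 2 * ‖g t x‖ ^ 2 = σ t ^ 2 * (‖g t x‖ ^ 2 / 2) := by ring
      _ ≤ σ t ^ 2 * (K ^ 2 / 2) :=
          mul_le_mul_of_nonneg_left (by linarith) (by positivity)
  -- Term 3 : trace of Hess
  have htr : ∀ t ∈ Set.Ioo (0:ℝ) τ, |(Hess t x).trace| ≤ n * K := by
    intro t ht
    calc |(Hess t x).trace| ≤ ∑ i, |Hess t x i i| := Finset.abs_sum_le_sum_abs _ _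
      _ ≤ ∑ _i : Fin n, K := Finset.sum_le_sum fun i _ => (hKb t ht).2 i i
      _ = n * K := by simp [mul_comm]
  have T3 : Tendsto (fun t => σ t ^ 2 / 2 * (Hess t x).trace) l (nhds 0) := by
    refine key _ _ (n * K / 2) hσ2 (hev.mono fun t ht => ?_)
    rw [abs_mul]
    have h1 := htr t ht
    have h2 : |σ t ^ 2 / 2| = σ t ^ 2 / 2 := abs_of_nonneg (by positivity)
    rw [h2]
    calc σ t ^ 2 / 2 * |(Hess t x).trace| = σ t ^ 2 * (|(Hess t x).trace| / 2) := by ring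
      _ ≤ σ t ^ 2 * (↑n * K / 2) :=
          mul_le_mul_of_nonneg_left (by linarith) (by positivity)
  -- Term 5 : conjugated trace
  have T5 : Tendsto (fun t => σ t ^ 4 / (2 * σy ^ 2) * (H * Hess t x * Hᵀ).trace)
      l (nhds 0) := by
    set C : ℝ := ∑ i, ∑ j, ∑ k, |H i k| * |H i j| with hC
    have hC0 : 0 ≤ C := by positivity
    refine key _ _ (C * K / (2 * σy ^ 2)) hσ4 (hev.mono fun t ht => ?_)
    rw [abs_mul]
    have h1 := trace_conj_bound H (Hess t x) K (hKb t ht).2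
    have h2 : |σ t ^ 4 / (2 * σy ^ 2)| = σ t ^ 4 / (2 * σy ^ 2) :=
      abs_of_nonneg (by positivity)
    rw [h2]
    have h3 : (0:ℝ) ≤ σ t ^ 4 / (2 * σy ^ 2) := by positivity
    calc σ t ^ 4 / (2 * σy ^ 2) * |(H * Hess t x * Hᵀ).trace|
        ≤ σ t ^ 4 / (2 * σy ^ 2) * (C * K) := by
          exact mul_le_mul_of_nonneg_left h1 h3
      _ = σ t ^ 4 * (C * K / (2 * σy ^ 2)) := by ring
  -- Term 6
  have T6 : Tendsto (fun t => σ t ^ 2 / (2 * σy ^ 2) * (H * Hᵀ).trace) l (nhds 0) := by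
    have := hσ2.mul_const ((H * Hᵀ).trace / (2 * σy ^ 2))
    rw [zero_mul] at this
    exact this.congr fun t => by ring
  -- Term 4 : data-fidelity term
  have hcont : Continuous (fun z : EuclideanSpace ℝ (Fin n) =>
      (∑ i, (y i - H.mulVec (fun k => z k) i) ^ 2) / (2 * σy ^ 2)) := by
    apply Continuous.div_const
    refine continuous_finset_sum _ fun i _ => ?_
    refine Continuous.pow ?_ 2
    refine continuous_const.sub ?_
    simp only [Matrix.mulVec, dotProduct]
    exact continuous_finset_sum _ fun j _ =>
      continuous_const.mul (EuclideanSpace.proj j).continuous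
  have hsmul0 : Tendsto (fun t => σ t ^ 2 • g t x) l
      (nhds (0 : EuclideanSpace ℝ (Fin n))) := by
    refine squeeze_zero_norm' ?_ (by simpa using hσ2.mul_const K :
      Tendsto (fun t => σ t ^ 2 * K) l (nhds 0))
    refine hev.mono fun t ht => ?_
    rw [norm_smul]
    have h1 := (hKb t ht).1
    have h2 : ‖(σ t ^ 2 : ℝ)‖ = σ t ^ 2 := by
      rw [Real.norm_eq_abs]; exact abs_of_nonneg (by positivity)
    rw [h2]
    exact mul_le_mul_of_nonneg_left h1 (by positivity)
  have hxg : Tendsto (fun t => x + σ t ^ 2 • g t x) l (nhds x) := by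
    have := (tendsto_const_nhds : Tendsto (fun _ : ℝ => x) l (nhds x)).add hsmul0
    simpa using this
  have T4 : Tendsto (fun t =>
      (∑ i, (y i - H.mulVec (fun k => (x + σ t ^ 2 • g t x) k) i) ^ 2) / (2 * σy ^ 2)) l
      (nhds ((∑ i, (y i - H.mulVec (fun k => x k) i) ^ 2) / (2 * σy ^ 2))) :=
    (hcont.tendsto x).comp hxg
  -- combine
  have T1 : Tendsto (fun t => -Real.log (p t x)) l (nhds (-Real.log (p0 x))) :=
    (hlim x hx).neg
  have hmain := ((((((T1.sub T2).sub T3).add T4).add T5).add T6).add_const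
      (Real.log py)).add_const
      (-(n : ℝ) / 2 + m * Real.log σy - ((n : ℝ) - m) / 2 * Real.log (2 * Real.pi))
  have hmain' := hmain.congr (fun t => by ring :
    ∀ t, (-Real.log (p t x) - σ t ^ 2 / 2 * ‖g t x‖ ^ 2
        - σ t ^ 2 / 2 * (Hess t x).trace
        + (∑ i, (y i - H.mulVec (fun k => (x + σ t ^ 2 • g t x) k) i) ^ 2) / (2 * σy ^ 2)
        + σ t ^ 4 / (2 * σy ^ 2) * (H * Hess t x * Hᵀ).trace
        + σ t ^ 2 / (2 * σy ^ 2) * (H * Hᵀ).trace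
        + Real.log py
        + (-(n : ℝ) / 2 + m * Real.log σy - ((n : ℝ) - m) / 2 * Real.log (2 * Real.pi)))
      = ((-Real.log (p t x) - σ t ^ 2 / 2 * ‖g t x‖ ^ 2
            - σ t ^ 2 / 2 * (Hess t x).trace
            + (∑ i, (y i - H.mulVec (fun k => (x + σ t ^ 2 • g t x) k) i) ^ 2)
                / (2 * σy ^ 2)
            + σ t ^ 4 / (2 * σy ^ 2) * (H * Hess t x * Hᵀ).trace
            + σ t ^ 2 / (2 * σy ^ 2) * (H * Hᵀ).trace
            + Real.log py - n * Real.log (σ t)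
            + (-(n : ℝ) / 2 + m * Real.log σy
                - ((n : ℝ) - m) / 2 * Real.log (2 * Real.pi)))
          + n * Real.log (σ t)))
  convert hmain' using 2
  rw [log_gpdf_eq m σy _ hσy]
  ring
end

section
/- With the assumptions of the previous proposition but requiring only p_t ∈ C¹ on B(0,d) with uniformly bounded ∇ log p_t for t < τ, the simplified VML function VML_S,t(x) = −log p_t(x) − (σ_t²/2)‖∇ log p_t(x)‖² + ‖y − H D(x,t)‖²/(2σ_y²) + log p(y) − n log σ_t + (m log σ_y − ((n−m)/2) log 2π) satisfies: VML_S,t(x) + n log σ_t → −log p₀(x|y) − (n/2) log 2π pointwise on B(0,d) as t → 0. -/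
open MeasureTheory Real Filter Matrix

/-- **Pointwise limit of the simplified VML.** Under `C¹` regularity of `p_t` on `B(0,d)`
with uniformly bounded score, `σ_t → 0`, and pointwise convergence of `log p_t` to
`log p₀`, the simplified VML function
`VML_{S,t}(x) = −log p_t(x) − (σ_t²/2)‖∇log p_t(x)‖² + ‖y − H D(x,t)‖²/(2σ_y²)
  + log p(y) − n log σ_t + (m log σ_y − ((n−m)/2) log 2π)`
satisfies `VML_{S,t}(x) + n log σ_t → −log p₀(x|y) − (n/2) log 2π` pointwise on `B(0,d)`. -/
theorem simplified_vml_pointwise_limit (n m : ℕ) (τ d : ℝ) (hτ : 0 < τ) (hd : 0 < d)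
    (p0 : EuclideanSpace ℝ (Fin n) → ℝ)
    (hp0_nonneg : ∀ x, 0 ≤ p0 x) (hp0_prob : ∫ x, p0 x = 1)
    (σ : ℝ → ℝ) (hσpos : ∀ t ∈ Set.Ioo (0 : ℝ) τ, 0 < σ t)
    (hσ0 : Tendsto σ (nhdsWithin 0 (Set.Ioo 0 τ)) (nhds 0))
    (p : ℝ → EuclideanSpace ℝ (Fin n) → ℝ)
    (hp : ∀ t x, p t x = ∫ x₀, gaussPdf n (σ t) x₀ x * p0 x₀)
    -- `p_t ∈ C¹` on the ball; `g t x = ∇ log p_t(x)`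
    (hC1 : ∀ t ∈ Set.Ioo (0 : ℝ) τ,
      ContDiffOn ℝ 1 (fun x => Real.log (p t x)) (Metric.closedBall 0 d))
    (g : ℝ → EuclideanSpace ℝ (Fin n) → EuclideanSpace ℝ (Fin n))
    (hg : ∀ t ∈ Set.Ioo (0 : ℝ) τ, ∀ x ∈ Metric.closedBall (0 : EuclideanSpace ℝ (Fin n)) d,
      HasGradientAt (fun z => Real.log (p t z)) (g t x) x)
    (hlim : ∀ x ∈ Metric.closedBall (0 : EuclideanSpace ℝ (Fin n)) d,
      Tendsto (fun t => Real.log (p t x)) (nhdsWithin 0 (Set.Ioo 0 τ))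
        (nhds (Real.log (p0 x))))
    (hbdd : ∃ K, ∀ t ∈ Set.Ioo (0 : ℝ) τ,
      ∀ x ∈ Metric.closedBall (0 : EuclideanSpace ℝ (Fin n)) d, ‖g t x‖ ≤ K)
    (H : Matrix (Fin m) (Fin n) ℝ) (y : Fin m → ℝ) (σy : ℝ) (hσy : 0 < σy)
    (py : ℝ)
    (hpy : py = ∫ x₀, gpdf m σy (∑ i, (y i - H.mulVec (fun k => x₀ k) i) ^ 2) * p0 x₀)
    (hpy_pos : 0 < py) :
    ∀ x ∈ Metric.closedBall (0 : EuclideanSpace ℝ (Fin n)) d,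
      Tendsto
        (fun t =>
          (-Real.log (p t x) - σ t ^ 2 / 2 * ‖g t x‖ ^ 2
              + (∑ i, (y i - H.mulVec (fun k => (x + σ t ^ 2 • g t x) k) i) ^ 2)
                  / (2 * σy ^ 2)
              + Real.log py - n * Real.log (σ t)
              + (m * Real.log σy - ((n : ℝ) - m) / 2 * Real.log (2 * Real.pi)))
            + n * Real.log (σ t))
        (nhdsWithin 0 (Set.Ioo 0 τ))
        (nhds
          (-(Real.log (p0 x)
              + Real.log (gpdf m σy (∑ i, (y i - H.mulVec (fun k => x k) i) ^ 2))
              - Real.log py)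
            - (n : ℝ) / 2 * Real.log (2 * Real.pi))) := by
  intro x hx
  obtain ⟨K, hK⟩ := hbdd
  set l := nhdsWithin (0:ℝ) (Set.Ioo 0 τ) with hl
  have hmem : ∀ᶠ t in l, t ∈ Set.Ioo (0:ℝ) τ := eventually_mem_nhdsWithin
  have hK0 : 0 ≤ K := le_trans (norm_nonneg _) (hK (τ/2) ⟨by positivity, by linarith⟩ x hx)
  have hσ2 : Tendsto (fun t => σ t ^ 2) l (nhds 0) := by
    have := (hσ0.mul hσ0)
    simpa [sq] using this
  -- ‖g t x‖ term
  have h2 : Tendsto (fun t => σ t ^ 2 / 2 * ‖g t x‖ ^ 2) l (nhds 0) := by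
    have hnn : ∀ᶠ t in l, (0:ℝ) ≤ σ t ^ 2 / 2 * ‖g t x‖ ^ 2 :=
      Eventually.of_forall fun t => by positivity
    have hub : ∀ᶠ t in l, σ t ^ 2 / 2 * ‖g t x‖ ^ 2 ≤ σ t ^ 2 / 2 * K ^ 2 := by
      filter_upwards [hmem] with t ht
      have h1 := hK t ht x hx
      have h2 : ‖g t x‖ ^ 2 ≤ K ^ 2 := by nlinarith [norm_nonneg (g t x)]
      have : (0:ℝ) ≤ σ t ^ 2 / 2 := by positivity
      exact mul_le_mul_of_nonneg_left h2 this
    have hlim2 : Tendsto (fun t => σ t ^ 2 / 2 * K ^ 2) l (nhds 0) := by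
      have := (hσ2.div_const 2).mul_const (K ^ 2)
      simpa using this
    exact squeeze_zero' hnn hub hlim2
  -- drift term
  have h3 : Tendsto (fun t => x + σ t ^ 2 • g t x) l (nhds x) := by
    have hn : Tendsto (fun t => σ t ^ 2 • g t x) l (nhds 0) := by
      refine squeeze_zero_norm' (a := fun t => σ t ^ 2 * K) ?_ ?_
      · filter_upwards [hmem] with t ht
        rw [norm_smul]
        have := hK t ht x hx
        have h0 : (0:ℝ) ≤ σ t ^ 2 := sq_nonneg _
        calc ‖σ t ^ 2‖ * ‖g t x‖ = σ t ^ 2 * ‖g t x‖ := by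
              rw [Real.norm_eq_abs, abs_of_nonneg h0]
          _ ≤ σ t ^ 2 * K := mul_le_mul_of_nonneg_left this h0
      · simpa using hσ2.mul_const K
    have := (tendsto_const_nhds (x := x) (f := l)).add hn
    simpa using this
  have hQcont : Continuous (fun v : EuclideanSpace ℝ (Fin n) =>
      ∑ i, (y i - H.mulVec (fun k => v k) i) ^ 2) := by
    apply continuous_finset_sum
    intro i _
    apply Continuous.pow
    apply Continuous.sub continuous_const
    simp only [Matrix.mulVec, dotProduct]
    exact continuous_finset_sum _ fun j _ =>
      (continuous_const.mul ((continuous_apply j).comp (PiLp.continuous_ofLp 2 _)))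
  have hQ : Tendsto (fun t => (∑ i, (y i - H.mulVec (fun k =>
      (x + σ t ^ 2 • g t x) k) i) ^ 2) / (2 * σy ^ 2)) l
      (nhds ((∑ i, (y i - H.mulVec (fun k => x k) i) ^ 2) / (2 * σy ^ 2))) :=
    ((hQcont.tendsto x).comp h3).div_const _
  have h1 := hlim x hx
  set Q := ∑ i, (y i - H.mulVec (fun k => x k) i) ^ 2 with hQdef
  have hcomb : Tendsto (fun t =>
      -Real.log (p t x) - σ t ^ 2 / 2 * ‖g t x‖ ^ 2
        + (∑ i, (y i - H.mulVec (fun k => (x + σ t ^ 2 • g t x) k) i) ^ 2) / (2 * σy ^ 2)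
        + Real.log py
        + ((m : ℝ) * Real.log σy - ((n : ℝ) - m) / 2 * Real.log (2 * Real.pi))) l
      (nhds (-Real.log (p0 x) - 0 + Q / (2 * σy ^ 2) + Real.log py
        + ((m : ℝ) * Real.log σy - ((n : ℝ) - m) / 2 * Real.log (2 * Real.pi)))) := by
    exact ((((h1.neg.sub h2).add hQ).add_const _).add_const _)
  have heq1 : (fun t =>
      (-Real.log (p t x) - σ t ^ 2 / 2 * ‖g t x‖ ^ 2
          + (∑ i, (y i - H.mulVec (fun k => (x + σ t ^ 2 • g t x) k) i) ^ 2)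
              / (2 * σy ^ 2)
          + Real.log py - n * Real.log (σ t)
          + ((m : ℝ) * Real.log σy - ((n : ℝ) - m) / 2 * Real.log (2 * Real.pi)))
        + n * Real.log (σ t)) = (fun t =>
      -Real.log (p t x) - σ t ^ 2 / 2 * ‖g t x‖ ^ 2
        + (∑ i, (y i - H.mulVec (fun k => (x + σ t ^ 2 • g t x) k) i) ^ 2) / (2 * σy ^ 2)
        + Real.log py
        + ((m : ℝ) * Real.log σy - ((n : ℝ) - m) / 2 * Real.log (2 * Real.pi))) := by
    funext t; ring
  rw [heq1]
  convert hcomb using 2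
  -- value equality
  have hlog_gpdf : Real.log (gpdf m σy Q)
      = -(m : ℝ) / 2 * (Real.log (2 * Real.pi) + 2 * Real.log σy) - Q / (2 * σy ^ 2) := by
    unfold gpdf
    have hbpos : (0:ℝ) < 2 * Real.pi * σy ^ 2 := by positivity
    rw [Real.log_mul (by positivity) (Real.exp_ne_zero _), Real.log_rpow hbpos,
      Real.log_exp]
    have : Real.log (2 * Real.pi * σy ^ 2)
        = Real.log (2 * Real.pi) + 2 * Real.log σy := by
      rw [Real.log_mul (by positivity) (by positivity), Real.log_pow]
      push_cast; ring
    rw [this]; ring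
  rw [hlog_gpdf]
  ring
end
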